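/- Let Π be a temporal Datalog program consisting of forward-propagating rules, F a set of facts, and α a temporal fact with time argument τ that has a derivation δ from Π ∪ F. Let τ_min be the minimum time point occurring in F. Then every time point occurring in δ lies in the interval [τ_min, τ]. -/

import Mathlib

/-- A fact is either rigid (no time argument) or temporal (with a natural-number time). -/
inductive TFact (A : Type) where
  | rigid (p : A)
  | temporal (p : A) (t : ℕ)

/-- The predicate of a fact. -/
def TFact.pred {A : Type} : TFact A → A
  | .rigid p => p
  | .temporal p _ => p

/-- A forward-propagating rule with a rigid head: all body atoms are rigid. -/
structure RigidRule (A : Type) where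
  head : A
  body : List A

/-- A forward-propagating rule with temporal head `headPred` at time `t`:
temporal body atoms are at times `t - k` for offsets `k`, rigid body atoms as given.
Rules mention no concrete time points: they are instantiated at every admissible `t`. -/
structure FPRule (A : Type) where
  headPred : A
  tempBody : List (A × ℕ)
  rigidBody : List A

/-- Entailment (existence of a hyper-resolution derivation) from a program of
forward-propagating rules `(Pr, Pt)` together with a set of facts `F`. -/
inductive Entails {A : Type} (Pr : Set (RigidRule A)) (Pt : Set (FPRule A))
    (F : Set (TFact A)) : TFact A → Prop where
  | fact {α : TFact A} : α ∈ F → Entails Pr Pt F α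
  | rigid {r : RigidRule A} : r ∈ Pr →
      (∀ b ∈ r.body, Entails Pr Pt F (.rigid b)) →
      Entails Pr Pt F (.rigid r.head)
  | temp {r : FPRule A} (t : ℕ) : r ∈ Pt →
      (∀ p ∈ r.tempBody, p.2 ≤ t) →
      (∀ p ∈ r.tempBody, Entails Pr Pt F (.temporal p.1 (t - p.2))) →
      (∀ b ∈ r.rigidBody, Entails Pr Pt F (.rigid b)) →
      Entails Pr Pt F (.temporal r.headPred t)

/-- A derivation tree: a node labelled with a conclusion fact, with subderivations. -/
inductive Deriv (A : Type) where
  | node (concl : TFact A) (subs : List (Deriv A))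

/-- The conclusion (root label head) of a derivation. -/
def Deriv.concl {A : Type} : Deriv A → TFact A
  | .node c _ => c

/-- Validity of a derivation from program `(Pr, Pt)` and facts `F`:
each node is labelled by a ground instance of a rule (or a fact, as a leaf),
and the body atoms are exactly the conclusions of the children. -/
inductive ValidDeriv {A : Type} (Pr : Set (RigidRule A)) (Pt : Set (FPRule A))
    (F : Set (TFact A)) : Deriv A → Prop where
  | fact {c : TFact A} : c ∈ F → ValidDeriv Pr Pt F (.node c [])
  | rigid {r : RigidRule A} {subs : List (Deriv A)} : r ∈ Pr →
      subs.map Deriv.concl = r.body.map TFact.rigid →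
      (∀ d ∈ subs, ValidDeriv Pr Pt F d) →
      ValidDeriv Pr Pt F (.node (.rigid r.head) subs)
  | temp {r : FPRule A} {subs : List (Deriv A)} (t : ℕ) : r ∈ Pt →
      (∀ p ∈ r.tempBody, p.2 ≤ t) →
      subs.map Deriv.concl =
        r.tempBody.map (fun p => TFact.temporal p.1 (t - p.2)) ++
          r.rigidBody.map TFact.rigid →
      (∀ d ∈ subs, ValidDeriv Pr Pt F d) →
      ValidDeriv Pr Pt F (.node (.temporal r.headPred t) subs)

/-- A time point `t` occurs in a derivation. -/
inductive TimeIn {A : Type} : Deriv A → ℕ → Prop where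
  | root (p : A) (t : ℕ) (subs : List (Deriv A)) :
      TimeIn (.node (.temporal p t) subs) t
  | sub {d : Deriv A} {t : ℕ} (c : TFact A) (subs : List (Deriv A)) :
      d ∈ subs → TimeIn d t → TimeIn (.node c subs) t

lemma times_aux {A : Type}
    (Pr : Set (RigidRule A)) (Pt : Set (FPRule A)) (F : Set (TFact A))
    (hsafe : ∀ r ∈ Pt, r.tempBody ≠ [])
    (τmin : ℕ) (hmin : IsLeast {t : ℕ | ∃ p : A, TFact.temporal p t ∈ F} τmin)
    {δ : Deriv A} (hδ : ValidDeriv Pr Pt F δ) :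
    ∀ s : ℕ, TimeIn δ s →
      ∃ b τ, δ.concl = TFact.temporal b τ ∧ τmin ≤ s ∧ s ≤ τ := by
  induction hδ with
  | @fact c hc =>
      intro s hs
      cases hs with
      | root p t subs => exact ⟨p, s, rfl, hmin.2 ⟨p, hc⟩, le_refl _⟩
      | sub c subs hd _ => simp at hd
  | @rigid r subs hr hmap hsubs ih =>
      intro s hs
      cases hs with
      | sub c subs hd ht =>
          obtain ⟨b, τ, hcb, -, -⟩ := ih _ hd s ht
          have : _root_.Deriv.concl _ ∈ subs.map Deriv.concl :=
            List.mem_map_of_mem (f := Deriv.concl) hd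
          rw [hmap] at this
          obtain ⟨q, -, hq⟩ := List.mem_map.1 this
          rw [hcb] at hq
          cases hq
  | @temp r subs t hr hle hmap hsubs ih =>
      intro s hs
      cases hs with
      | root p t subs =>
          refine ⟨r.headPred, t, rfl, ?_, le_refl _⟩
          obtain ⟨p, hp⟩ := List.exists_mem_of_ne_nil _ (hsafe r hr)
          have hmem : TFact.temporal p.1 (t - p.2) ∈ subs.map Deriv.concl := by
            rw [hmap]
            exact List.mem_append_left _ (List.mem_map_of_mem hp)
          obtain ⟨d, hd, hdc⟩ := List.mem_map.1 hmem
          obtain ⟨c, subs'⟩ := d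
          simp only [Deriv.concl] at hdc
          subst hdc
          obtain ⟨b, τ, hcb, h1, h2⟩ := ih _ hd _ (TimeIn.root _ _ _)
          simp only [Deriv.concl, TFact.temporal.injEq] at hcb
          exact le_trans h1 (hcb.2 ▸ Nat.sub_le t p.2)
      | sub c subs hd ht =>
          obtain ⟨b, τ, hcb, h1, h2⟩ := ih _ hd s ht
          refine ⟨r.headPred, t, rfl, h1, ?_⟩
          have hmem : _root_.Deriv.concl _ ∈ subs.map Deriv.concl :=
            List.mem_map_of_mem (f := Deriv.concl) hd
          rw [hmap, hcb] at hmem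
          rcases List.mem_append.1 hmem with h | h
          · obtain ⟨q, -, hq⟩ := List.mem_map.1 h
            cases hq
            exact le_trans h2 (Nat.sub_le t q.2)
          · obtain ⟨q, -, hq⟩ := List.mem_map.1 h
            cases hq

/-- Every time point occurring in a derivation of a temporal fact with time `τ`
from a forward-propagating program and facts `F` lies in `[τ_min, τ]`,
where `τ_min` is the minimum time point in `F`. -/
theorem times_in_derivation_bounded {A : Type}
    (Pr : Set (RigidRule A)) (Pt : Set (FPRule A)) (F : Set (TFact A))
    (hsafe : ∀ r ∈ Pt, r.tempBody ≠ [])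
    (τmin : ℕ) (hmin : IsLeast {t : ℕ | ∃ p : A, TFact.temporal p t ∈ F} τmin)
    (a : A) (τ : ℕ) (δ : Deriv A)
    (hδ : ValidDeriv Pr Pt F δ) (hc : δ.concl = .temporal a τ) :
    ∀ t : ℕ, TimeIn δ t → τmin ≤ t ∧ t ≤ τ := by
  intro t ht
  obtain ⟨b, τ', hcb, h1, h2⟩ := times_aux Pr Pt F hsafe τmin hmin hδ t ht
  rw [hc] at hcb
  cases hcb
  exact ⟨h1, h2⟩
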